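/- Let Γ = Γ₁ ∗_Σ Γ₂ be an amalgamated free product such that for each i ∈ {1,2}, every g ∈ Γᵢ \ Σ satisfies [Σ : Σ ∩ gΣg⁻¹] = ∞. Then every g ∈ Γ \ Σ satisfies [Σ : Σ ∩ gΣg⁻¹] = ∞; equivalently, Comm¹_Γ(Σ) = Σ. -/

import Mathlib

open Monoid PushoutI

/-- The conjugate subgroup `g S g⁻¹`. -/
def conjSub {G : Type*} [Group G] (g : G) (S : Subgroup G) : Subgroup G :=
  S.map (MulAut.conj g).toMonoidHom

namespace StmtAux

open Monoid Monoid.CoprodI Subgroup Function List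

lemma mem_conjSub {Γ : Type*} [Group Γ] {g s : Γ} {S : Subgroup Γ} :
    s ∈ conjSub g S ↔ g⁻¹ * s * g ∈ S := by
  constructor
  · rintro ⟨t, ht, rfl⟩
    simpa [mul_assoc] using ht
  · intro h
    exact ⟨g⁻¹ * s * g, h, by simp [mul_assoc]⟩

variable {ι : Type*} {G : ι → Type*} {H : Type*} [Group H] [∀ i, Group (G i)]
  {φ : ∀ i, H →* G i}

/-- Two reduced words with the same image in the pushout have the same sequence of indices. -/
lemma fst_eq (hφ : ∀ i, Function.Injective (φ i)) {w₁ w₂ : Word G}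
    (h₁ : PushoutI.Reduced φ w₁) (h₂ : PushoutI.Reduced φ w₂)
    (h : PushoutI.ofCoprodI (φ := φ) w₁.prod = PushoutI.ofCoprodI w₂.prod) :
    w₁.toList.map Sigma.fst = w₂.toList.map Sigma.fst := by
  obtain ⟨d⟩ := Monoid.PushoutI.NormalWord.transversal_nonempty φ hφ
  obtain ⟨v₁, hv₁, hm₁⟩ := h₁.exists_normalWord_prod_eq d
  obtain ⟨v₂, hv₂, hm₂⟩ := h₂.exists_normalWord_prod_eq d
  have hv : v₁ = v₂ := PushoutI.NormalWord.prod_injective (by rw [hv₁, hv₂, h])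
  rw [← hm₁, ← hm₂, hv]

lemma chain_iff (L : List (Σ i, G i)) :
    L.IsChain (fun a b => a.1 ≠ b.1) ↔ (L.map Sigma.fst).IsChain (· ≠ ·) := by
  rw [List.isChain_map]

/-- The key lemma: if `w₀` is a reduced word whose first letter is `⟨i, x⟩`, and
`σ ∈ Σ` is such that `w₀⁻¹ σ w₀ ∈ Σ`, then already `x⁻¹ σ x ∈ Σ`. -/
lemma key (hφ : ∀ i, Function.Injective (φ i))
    {w₀ : Word G} (hred : PushoutI.Reduced φ w₀) {i : ι} {x : G i}
    {l : List (Σ i, G i)} (hl : w₀.toList = ⟨i, x⟩ :: l) (σ : H)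
    (hσ : (PushoutI.ofCoprodI (φ := φ) w₀.prod)⁻¹ * PushoutI.base φ σ *
        PushoutI.ofCoprodI w₀.prod ∈ (PushoutI.base φ).range) :
    (PushoutI.of (φ := φ) i x)⁻¹ * PushoutI.base φ σ * PushoutI.of i x ∈
      (PushoutI.base φ).range := by
  by_contra hnot
  set y : G i := x⁻¹ * φ i σ * x with hy
  have hofy : PushoutI.of (φ := φ) i y =
      (PushoutI.of i x)⁻¹ * PushoutI.base φ σ * PushoutI.of i x := by
    simp [hy, map_mul, of_apply_eq_base]
  have hyr : y ∉ (φ i).range := by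
    rintro ⟨τ, hτ⟩
    exact hnot ⟨τ, by rw [← of_apply_eq_base (φ := φ) i, hτ, hofy]⟩
  have hy1 : y ≠ 1 := fun h => hyr (h ▸ one_mem _)
  obtain ⟨τ, hτ⟩ := hσ
  -- the tail word
  have hl_ne_one : ∀ p ∈ l, Sigma.snd p ≠ 1 :=
    fun p hp => w₀.ne_one p (by rw [hl]; exact List.mem_cons_of_mem _ hp)
  have hlred : ∀ p ∈ l, p.2 ∉ (φ p.1).range :=
    fun p hp => hred p (by rw [hl]; exact List.mem_cons_of_mem _ hp)
  have hchain : (⟨i, x⟩ :: l : List (Σ i, G i)).Chain' (fun a b => a.1 ≠ b.1) := by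
    rw [← hl]; exact w₀.chain_ne
  have hchl : l.Chain' (fun a b : Σ i, G i => a.1 ≠ b.1) := hchain.tail
  have hhead : ∀ b ∈ l.head?, i ≠ b.1 := (List.isChain_cons.mp hchain).1
  let wt : Word G := ⟨l, hl_ne_one, hchl⟩
  have hprod : PushoutI.ofCoprodI (φ := φ) w₀.prod =
      PushoutI.of i x * PushoutI.ofCoprodI wt.prod := by
    simp [Word.prod, hl, wt]
  let w' : Word G := ⟨⟨i, y⟩ :: l,
    by rintro p hp; rcases List.mem_cons.mp hp with rfl | hp
       · exact hy1
       · exact hl_ne_one p hp,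
    List.isChain_cons.mpr ⟨hhead, hchl⟩⟩
  have hredw' : PushoutI.Reduced φ w' := by
    rintro p hp
    rcases List.mem_cons.mp hp with rfl | hp
    · exact hyr
    · exact hlred p hp
  have h2 : PushoutI.base φ σ * PushoutI.ofCoprodI (φ := φ) w₀.prod =
      PushoutI.ofCoprodI w₀.prod * PushoutI.base φ τ := by
    rw [hτ]; group
  have hprodw' : PushoutI.ofCoprodI (φ := φ) w'.prod =
      PushoutI.ofCoprodI wt.prod * PushoutI.base φ τ := by
    have h1 : PushoutI.ofCoprodI (φ := φ) w'.prod =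
        PushoutI.of i y * PushoutI.ofCoprodI wt.prod := by
      simp [Word.prod, w', wt]
    calc PushoutI.ofCoprodI (φ := φ) w'.prod
        = PushoutI.of i y * PushoutI.ofCoprodI wt.prod := h1
      _ = (PushoutI.of i x)⁻¹ *
            (PushoutI.base φ σ * (PushoutI.of i x * PushoutI.ofCoprodI wt.prod)) := by
          rw [hofy]; group
      _ = (PushoutI.of i x)⁻¹ * (PushoutI.ofCoprodI w₀.prod * PushoutI.base φ τ) := by
          rw [← hprod, h2]
      _ = PushoutI.ofCoprodI wt.prod * PushoutI.base φ τ := by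
          rw [hprod]; group
  obtain rfl | ⟨l₂, a, hcat⟩ := List.eq_nil_or_concat l
  · -- tail empty: w' is a reduced nonempty word in the base range
    have hmem : PushoutI.ofCoprodI (φ := φ) w'.prod ∈ (PushoutI.base φ).range := by
      rw [hprodw']
      have : PushoutI.ofCoprodI (φ := φ) wt.prod = 1 := by simp [Word.prod, wt]
      rw [this, one_mul]
      exact ⟨τ, rfl⟩
    have := hredw'.eq_empty_of_mem_range hφ hmem
    have := congrArg Word.toList this
    simp [w', Word.empty] at this
  · -- tail nonempty: do surgery on the last letter
    obtain ⟨j, z⟩ := a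
    rw [List.concat_eq_append] at hcat
    subst hcat
    have hzr : z ∉ (φ j).range := hlred ⟨j, z⟩ (by simp)
    have hz'r : z * φ j τ ∉ (φ j).range := by
      rintro hmem
      exact hzr (by
        have : z = (z * φ j τ) * (φ j τ)⁻¹ := by group
        rw [this]
        exact mul_mem hmem (inv_mem ⟨τ, rfl⟩))
    have hz'1 : z * φ j τ ≠ 1 := fun h => hz'r (h ▸ one_mem _)
    have hmapfst : ((l₂ ++ [⟨j, z * φ j τ⟩] : List (Σ i, G i)).map Sigma.fst) =
        ((l₂ ++ [⟨j, z⟩] : List (Σ i, G i)).map Sigma.fst) := by simp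
    let w'' : Word G := ⟨l₂ ++ [⟨j, z * φ j τ⟩],
      by rintro p hp
         rcases List.mem_append.mp hp with hp | hp
         · exact hl_ne_one p (List.mem_append_left _ hp)
         · rcases List.mem_singleton.mp hp with rfl
           exact hz'1,
      by rw [chain_iff, hmapfst, ← chain_iff]; exact hchl⟩
    have hredw'' : PushoutI.Reduced φ w'' := by
      rintro p hp
      rcases List.mem_append.mp hp with hp | hp
      · exact hlred p (List.mem_append_left _ hp)
      · rcases List.mem_singleton.mp hp with rfl
        exact hz'r
    have hprodw'' : PushoutI.ofCoprodI (φ := φ) w''.prod =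
        PushoutI.ofCoprodI wt.prod * PushoutI.base φ τ := by
      simp [Word.prod, w'', wt, map_mul, of_apply_eq_base, mul_assoc]
    have heq : PushoutI.ofCoprodI (φ := φ) w'.prod = PushoutI.ofCoprodI w''.prod :=
      hprodw'.trans hprodw''.symm
    have hfst := fst_eq hφ hredw' hredw'' heq
    have hlen := congrArg List.length hfst
    simp [w', w''] at hlen

end StmtAux

/-- If `Comm¹_{Γᵢ}(Σ) = Σ` for `i = 1, 2`, then `Comm¹_Γ(Σ) = Σ` in `Γ = Γ₁ ∗_Σ Γ₂`:
every `g ∉ Σ` satisfies `[Σ : Σ ∩ gΣg⁻¹] = ∞`. -/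
theorem stmt8 {H : Type*} {G : Bool → Type*} [Group H] [∀ i, Group (G i)]
    (φ : ∀ i, H →* G i) (hφ : ∀ i, Function.Injective (φ i))
    (hyp : ∀ (i : Bool) (x : G i), x ∉ (φ i).range →
      (conjSub (PushoutI.of (φ := φ) i x) (PushoutI.base φ).range).relIndex
        (PushoutI.base φ).range = 0) :
    ∀ g : PushoutI φ, g ∉ (PushoutI.base φ).range →
      (conjSub g (PushoutI.base φ).range).relIndex (PushoutI.base φ).range = 0 := by
  classical
  intro g hg
  obtain ⟨d⟩ := Monoid.PushoutI.NormalWord.transversal_nonempty φ hφ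
  set w : PushoutI.NormalWord d := PushoutI.NormalWord.equiv g with hw
  have hgw : w.prod = g := PushoutI.NormalWord.equiv.symm_apply_apply g
  have hred : PushoutI.Reduced φ w.toWord := by
    rintro ⟨j, z⟩ hz hin
    have hzset := w.normalized j z hz
    have hz1 := w.toWord.ne_one _ hz
    have h2 := (d.compl j).1
      (a₁ := (⟨⟨z, hin⟩, ⟨1, d.one_mem j⟩⟩ : ((φ j).range : Set (G j)) × (d.set j)))
      (a₂ := (⟨1, Subgroup.one_mem _⟩, ⟨z, hzset⟩)) (by simp)
    simp [Prod.ext_iff, Subtype.ext_iff] at h2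
    exact hz1 h2.1
  rcases hcase : w.toWord.toList with _ | ⟨⟨i, x⟩, l⟩
  · exfalso
    apply hg
    refine ⟨w.head, ?_⟩
    rw [← hgw]
    simp [PushoutI.NormalWord.prod, Monoid.CoprodI.Word.prod, hcase]
  · set b : PushoutI φ := PushoutI.base φ w.head with hb
    set r : PushoutI φ := PushoutI.ofCoprodI (φ := φ) w.toWord.prod with hr
    have hgw' : g = b * r := by rw [← hgw]; rfl
    set x' : G i := φ i w.head * x with hx'
    have hxr : x ∉ (φ i).range := hred ⟨i, x⟩ (by rw [hcase]; exact List.mem_cons_self)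
    have hx'r : x' ∉ (φ i).range := by
      rintro hmem
      apply hxr
      have : x = (φ i w.head)⁻¹ * x' := by rw [hx']; group
      rw [this]
      exact mul_mem (inv_mem ⟨w.head, rfl⟩) hmem
    have hx'of : PushoutI.of (φ := φ) i x' = b * PushoutI.of i x := by
      simp [hx', map_mul, of_apply_eq_base, hb]
    rw [← Subgroup.inf_relIndex_right]
    refine Subgroup.relIndex_eq_zero_of_le_left (K := conjSub (PushoutI.of (φ := φ) i x')
      (PushoutI.base φ).range) ?_ (hyp i x' hx'r)
    rintro s ⟨hs1, hs2⟩
    obtain ⟨σ₀, hσ₀⟩ := hs2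
    set σ : H := w.head⁻¹ * σ₀ * w.head with hσdef
    have hbs : b⁻¹ * s * b = PushoutI.base φ σ := by
      rw [← hσ₀]; simp [hσdef, map_mul, hb, mul_assoc]
    have h3 := StmtAux.mem_conjSub.mp hs1
    rw [hgw'] at h3
    have hkeyhyp : r⁻¹ * PushoutI.base φ σ * r ∈ (PushoutI.base φ).range := by
      have h4 : r⁻¹ * PushoutI.base φ σ * r = (b * r)⁻¹ * s * (b * r) := by
        rw [← hbs]; group
      rw [h4]; exact h3
    have hres := StmtAux.key hφ hred hcase σ hkeyhyp
    apply StmtAux.mem_conjSub.mpr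
    have h5 : (PushoutI.of (φ := φ) i x')⁻¹ * s * PushoutI.of i x' =
        (PushoutI.of i x)⁻¹ * PushoutI.base φ σ * PushoutI.of i x := by
      rw [hx'of, ← hbs]; group
    rw [h5]; exact hres
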